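/- Iterated partial derivatives with respect to nonempty words are derived terms: for every regular expression E over α, every letter a ∈ α and every word w : List α, one has ∂_{a :: w}(E) ⊆ DT(E), where ∂ is the extension of the Antimirov partial derivative to words. In particular, the derived-term automaton of E has at most ℓ(E) + 1 reachable states. -/

import Mathlib

open RegularExpression

open scoped Classical in
/-- The finite set of *derived terms* of a regular expression. -/
noncomputable def derivedTerms {α : Type*} :
    RegularExpression α → Finset (RegularExpression α)
  | zero => ∅
  | epsilon => ∅
  | char _ => {1}
  | plus P Q => derivedTerms P ∪ derivedTerms Q
  | comp P Q => (derivedTerms P).image (fun K => K * Q) ∪ derivedTerms Q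
  | RegularExpression.star P => (derivedTerms P).image (fun K => K * RegularExpression.star P)

/-- The *literal length* of a regular expression: the number of occurrences
of letters of the alphabet in it. -/
def litLength {α : Type*} : RegularExpression α → ℕ
  | zero => 0
  | epsilon => 0
  | char _ => 1
  | plus P Q => litLength P + litLength Q
  | comp P Q => litLength P + litLength Q
  | RegularExpression.star P => litLength P

open scoped Classical in
/-- The finite set of *Antimirov partial derivatives* of a regular expression
with respect to a letter `a`. -/
noncomputable def aderiv {α : Type*} (a : α) :
    RegularExpression α → Finset (RegularExpression α)
  | zero => ∅
  | epsilon => ∅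
  | char b => if b = a then {1} else ∅
  | plus P Q => aderiv a P ∪ aderiv a Q
  | comp P Q =>
      if [] ∈ P.matches' then (aderiv a P).image (fun K => K * Q) ∪ aderiv a Q
      else (aderiv a P).image (fun K => K * Q)
  | RegularExpression.star P => (aderiv a P).image (fun K => K * RegularExpression.star P)

open scoped Classical in
/-- Extension of the Antimirov partial derivative to words:
`∂_[](E) = {E}` and `∂_{w · a}(E) = ⋃_{K ∈ ∂_w(E)} ∂ₐ(K)`. -/
noncomputable def aderivWord {α : Type*} (E : RegularExpression α)
    (w : List α) : Finset (RegularExpression α) :=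
  w.foldl (fun s a => s.biUnion (fun K => aderiv a K)) {E}

open scoped Classical

private lemma card_derivedTerms_le {α : Type*} (E : RegularExpression α) :
    (derivedTerms E).card ≤ litLength E := by
  induction E with
  | zero => simp [derivedTerms, litLength]
  | epsilon => simp [derivedTerms, litLength]
  | char b => simp [derivedTerms, litLength]
  | plus P Q hP hQ =>
      calc (derivedTerms (P + Q)).card
          ≤ (derivedTerms P).card + (derivedTerms Q).card := Finset.card_union_le _ _
        _ ≤ litLength P + litLength Q := Nat.add_le_add hP hQ
  | comp P Q hP hQ =>
      calc (derivedTerms (P * Q)).card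
          ≤ ((derivedTerms P).image (fun K => K * Q)).card + (derivedTerms Q).card :=
            Finset.card_union_le _ _
        _ ≤ (derivedTerms P).card + (derivedTerms Q).card :=
            Nat.add_le_add_right (Finset.card_image_le) _
        _ ≤ litLength P + litLength Q := Nat.add_le_add hP hQ
  | star P hP =>
      calc (derivedTerms P.star).card
          ≤ (derivedTerms P).card := Finset.card_image_le
        _ ≤ litLength P := hP

private lemma aderiv_subset_derivedTerms {α : Type*} (a : α) (E : RegularExpression α) :
    aderiv a E ⊆ derivedTerms E := by
  induction E with
  | zero => simp [aderiv, derivedTerms]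
  | epsilon => simp [aderiv, derivedTerms]
  | char b =>
      simp only [aderiv, derivedTerms]
      split_ifs <;> simp
  | plus P Q hP hQ =>
      simp only [aderiv, derivedTerms]
      exact Finset.union_subset_union hP hQ
  | comp P Q hP hQ =>
      simp only [aderiv, derivedTerms]
      split_ifs
      · exact Finset.union_subset_union (Finset.image_subset_image hP) hQ
      · exact (Finset.image_subset_image hP).trans Finset.subset_union_left
  | star P hP =>
      simp only [aderiv, derivedTerms]
      exact Finset.image_subset_image hP

private lemma aderiv_derivedTerms_subset {α : Type*} (a : α) (E K : RegularExpression α)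
    (hK : K ∈ derivedTerms E) : aderiv a K ⊆ derivedTerms E := by
  induction E generalizing K with
  | zero => simp [derivedTerms] at hK
  | epsilon => simp [derivedTerms] at hK
  | char b =>
      simp only [derivedTerms, Finset.mem_singleton] at hK
      subst hK
      simp [aderiv]
  | plus P Q hP hQ =>
      simp only [derivedTerms, Finset.mem_union] at hK
      rcases hK with hK | hK
      · exact (hP _ hK).trans Finset.subset_union_left
      · exact (hQ _ hK).trans Finset.subset_union_right
  | comp P Q hP hQ =>
      simp only [derivedTerms, Finset.mem_union, Finset.mem_image] at hK
      rcases hK with ⟨K', hK', rfl⟩ | hK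
      · have h1 : (aderiv a K').image (fun L => L * Q) ⊆ derivedTerms (P * Q) := by
          intro x hx
          simp only [Finset.mem_image] at hx
          obtain ⟨L, hL, rfl⟩ := hx
          simp only [derivedTerms, Finset.mem_union, Finset.mem_image]
          exact Or.inl ⟨L, hP _ hK' hL, rfl⟩
        have h2 : aderiv a Q ⊆ derivedTerms (P * Q) :=
          (aderiv_subset_derivedTerms a Q).trans Finset.subset_union_right
        simp only [aderiv]
        split_ifs
        · exact Finset.union_subset h1 h2
        · exact h1
      · exact (hQ _ hK).trans Finset.subset_union_right
  | star P hP =>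
      simp only [derivedTerms, Finset.mem_image] at hK
      obtain ⟨K', hK', rfl⟩ := hK
      have h1 : (aderiv a K').image (fun L => L * P.star) ⊆ derivedTerms P.star := by
        intro x hx
        simp only [Finset.mem_image] at hx
        obtain ⟨L, hL, rfl⟩ := hx
        simp only [derivedTerms, Finset.mem_image]
        exact ⟨L, hP _ hK' hL, rfl⟩
      have h2 : aderiv a P.star ⊆ derivedTerms P.star := aderiv_subset_derivedTerms a _
      simp only [aderiv]
      split_ifs
      · exact Finset.union_subset h1 h2
      · exact h1

private lemma foldl_subset {α : Type*} (E : RegularExpression α) (w : List α)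
    (S : Finset (RegularExpression α)) (hS : S ⊆ derivedTerms E) :
    w.foldl (fun s a => s.biUnion (fun K => aderiv a K)) S ⊆ derivedTerms E := by
  induction w generalizing S with
  | nil => exact hS
  | cons b w ih =>
      refine ih _ ?_
      intro x hx
      simp only [Finset.mem_biUnion] at hx
      obtain ⟨K, hK, hx⟩ := hx
      exact aderiv_derivedTerms_subset b E K (hS hK) hx

/-- Iterated partial derivatives with respect to nonempty words are derived
terms, and the derived-term automaton has at most `ℓ(E) + 1` reachable
states. -/
theorem aderivWord_cons_subset_derivedTerms {α : Type*} [DecidableEq α]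
    (E : RegularExpression α) (a : α) (w : List α) :
    aderivWord E (a :: w) ⊆ derivedTerms E ∧
      (insert E (derivedTerms E)).card ≤ litLength E + 1 := by
  constructor
  · show (a :: w).foldl _ ({E} : Finset (RegularExpression α)) ⊆ _
    rw [List.foldl_cons]
    refine foldl_subset E w _ ?_
    intro x hx
    simp only [Finset.mem_biUnion, Finset.mem_singleton] at hx
    obtain ⟨K, rfl, hx⟩ := hx
    exact aderiv_subset_derivedTerms a _ hx
  · calc (insert E (derivedTerms E)).card ≤ (derivedTerms E).card + 1 :=
        Finset.card_insert_le _ _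
      _ ≤ litLength E + 1 := Nat.add_le_add_right (card_derivedTerms_le E) 1
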